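/- arXiv:0907.2755 — 6 statements merged into one kernel-verified Lean document; each statement's English description precedes it below -/
import Mathlib

section
/- If some vertex of a finite strongly connected directed graph with constant out-degree has two incoming bunches (i.e., two distinct vertices each of whose entire set of outgoing edges leads exclusively to that vertex), then under every coloring of the edges turning the graph into a deterministic finite automaton, those two vertices form a stable pair: for every word s mapping them to states p and q, there exists a word w with pw = qw. -/
/-- A vertex with two incoming bunches forms a stable pair under any coloring. -/
theorem stmt0 {V : Type*} [Fintype V] [DecidableEq V] (k : ℕ) (hk : 0 < k)
    (outs : V → Multiset V)
    (hdeg : ∀ v, Multiset.card (outs v) = k)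
    (hsc : ∀ u v : V, Relation.ReflTransGen (fun x y => y ∈ outs x) u v)
    (p q r : V) (hpq : p ≠ q)
    (hp : outs p = Multiset.replicate k r)
    (hq : outs q = Multiset.replicate k r)
    (δ : V → Fin k → V)
    (hδ : ∀ v, Multiset.map (δ v) Finset.univ.val = outs v) :
    ∀ u : List (Fin k), ∃ w : List (Fin k),
      (u ++ w).foldl δ p = (u ++ w).foldl δ q := by
  have hpr : ∀ a : Fin k, δ p a = r := by
    intro a
    have hm : δ p a ∈ Multiset.map (δ p) Finset.univ.val :=
      Multiset.mem_map_of_mem _ (Finset.mem_univ_val a)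
    rw [hδ p, hp] at hm
    exact Multiset.eq_of_mem_replicate hm
  have hqr : ∀ a : Fin k, δ q a = r := by
    intro a
    have hm : δ q a ∈ Multiset.map (δ q) Finset.univ.val :=
      Multiset.mem_map_of_mem _ (Finset.mem_univ_val a)
    rw [hδ q, hq] at hm
    exact Multiset.eq_of_mem_replicate hm
  intro u
  match u with
  | [] =>
    exact ⟨[⟨0, hk⟩], by simp [hpr, hqr]⟩
  | a :: u' =>
    exact ⟨[], by simp [hpr a, hqr a]⟩
end

section
/- A deterministic finite automaton possesses a synchronizing word if and only if every pair of states can be merged, i.e., for all states p, q there exists a word w with pw = qw. -/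
/-- A DFA has a synchronizing word iff every pair of states can be merged. -/
theorem stmt1 {Q A : Type*} [Fintype Q] [Nonempty Q] (δ : Q → A → Q) :
    (∃ s : List A, ∃ q0 : Q, ∀ p : Q, s.foldl δ p = q0) ↔
      (∀ p q : Q, ∃ w : List A, w.foldl δ p = w.foldl δ q) := by
  classical
  constructor
  · rintro ⟨s, q0, hs⟩ p q
    exact ⟨s, by rw [hs p, hs q]⟩
  · intro h
    have key : ∀ n (S : Finset Q), S.card ≤ n → S.Nonempty →
        ∃ w : List A, ∃ q0 : Q, ∀ p ∈ S, w.foldl δ p = q0 := by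
      intro n
      induction n with
      | zero => intro S hS hne; simp [Finset.card_eq_zero.mp (Nat.le_zero.mp hS)] at hne
      | succ n ih =>
        intro S hS hne
        by_cases h1 : S.card ≤ 1
        · obtain ⟨a, ha⟩ := hne
          exact ⟨[], a, fun p hp => by
            simpa using Finset.card_le_one.mp h1 p hp a ha⟩
        · push_neg at h1
          obtain ⟨p, hp, q, hq, hpq⟩ := Finset.one_lt_card.mp h1
          obtain ⟨w, hw⟩ := h p q
          set T := S.image (fun x => w.foldl δ x) with hT
          have hTcard : T.card ≤ n := by
            have hle : T.card ≤ S.card := Finset.card_image_le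
            have hne' : T.card ≠ S.card := by
              intro heq
              have hinj := Finset.injOn_of_card_image_eq heq
              exact hpq (hinj hp hq hw)
            omega
          have hTne : T.Nonempty := hne.image _
          obtain ⟨w', q0, hw'⟩ := ih T hTcard hTne
          refine ⟨w ++ w', q0, fun x hx => ?_⟩
          rw [List.foldl_append]
          exact hw' _ (Finset.mem_image_of_mem _ hx)
    obtain ⟨w, q0, hw⟩ := key (Fintype.card Q) Finset.univ (Finset.card_le_univ _) Finset.univ_nonempty
    exact ⟨w, q0, fun p => hw p (Finset.mem_univ p)⟩
end

section
/- If a finite strongly connected directed graph with constant out-degree admits a synchronizing coloring, then the greatest common divisor of the lengths of all its cycles is 1. -/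
def hasWalk {V : Type*} (E : V → V → Prop) : ℕ → V → V → Prop
  | 0, u, v => u = v
  | (n + 1), u, v => ∃ x, E u x ∧ hasWalk E n x v

lemma walk_foldl {V : Type*} {k : ℕ} (outs : V → Multiset V) (δ : V → Fin k → V)
    (hδ : ∀ v, Multiset.map (δ v) Finset.univ.val = outs v) :
    ∀ (s : List (Fin k)) (p : V),
      hasWalk (fun x y => y ∈ outs x) s.length p (s.foldl δ p) := by
  intro s
  induction s with
  | nil => intro p; exact rfl
  | cons a t ih =>
    intro p
    refine ⟨δ p a, ?_, ih (δ p a)⟩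
    show δ p a ∈ outs p
    rw [← hδ p]
    exact Multiset.mem_map_of_mem _ (Finset.mem_univ_val a)

/-- If a strongly connected graph of constant out-degree admits a synchronizing
coloring, then the gcd of the lengths of all its cycles is 1. -/
theorem stmt2 {V : Type*} [Fintype V] [DecidableEq V] [Nonempty V] (k : ℕ) (hk : 0 < k)
    (outs : V → Multiset V)
    (hdeg : ∀ v, Multiset.card (outs v) = k)
    (hsc : ∀ u v : V, Relation.ReflTransGen (fun x y => y ∈ outs x) u v)
    (hsync : ∃ δ : V → Fin k → V,
      (∀ v, Multiset.map (δ v) Finset.univ.val = outs v) ∧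
      ∃ s : List (Fin k), ∃ q0 : V, ∀ p : V, s.foldl δ p = q0) :
    ∀ d : ℕ, (∀ n : ℕ, 0 < n → (∃ v : V, hasWalk (fun x y => y ∈ outs x) n v v) → d ∣ n)
      → d = 1 := by
  intro d hd
  obtain ⟨δ, hδ, s, q0, hq0⟩ := hsync
  set L := s.length with hL
  -- there is an edge out of q0
  have hcard : 0 < Multiset.card (outs q0) := by rw [hdeg]; exact hk
  obtain ⟨w, hw⟩ := Multiset.card_pos_iff_exists_mem.mp hcard
  -- d divides L
  have hdL : d ∣ L := by
    rcases Nat.eq_zero_or_pos L with h0 | hpos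
    · simp [h0]
    · refine hd L hpos ⟨q0, ?_⟩
      have := walk_foldl outs δ hδ s q0
      rwa [hq0 q0] at this
  -- d divides L + 1
  have hdL1 : d ∣ L + 1 := by
    refine hd (L + 1) (Nat.succ_pos L) ⟨q0, ⟨w, hw, ?_⟩⟩
    have := walk_foldl outs δ hδ s w
    rwa [hq0 w] at this
  have : d ∣ 1 := by
    have := Nat.dvd_sub hdL1 hdL
    simpa using this
  exact Nat.dvd_one.mp this
end

section
/- In a deterministic finite automaton with n states that possesses a synchronizing word, for every subset S of states with |S| ≥ 2 there exists a word w of length at most n² with |Sw| < |S|. -/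
lemma merge_short {Q A : Type*} [Fintype Q] [DecidableEq Q] (δ : Q → A → Q)
    (p q : Q) :
    ∀ n (w : List A), w.length = n → w.foldl δ p = w.foldl δ q →
      ∃ w' : List A, w'.length ≤ Fintype.card Q ^ 2 ∧ w'.foldl δ p = w'.foldl δ q := by
  intro n
  induction n using Nat.strong_induction_on with
  | _ n ih =>
    intro w hlen hmerge
    by_cases hle : w.length ≤ Fintype.card Q ^ 2
    · exact ⟨w, hle, hmerge⟩
    · push_neg at hle
      have hcard : Fintype.card (Q × Q) < Fintype.card (Fin (w.length + 1)) := by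
        simp [Fintype.card_prod, Fintype.card_fin]
        nlinarith [hle, sq_nonneg (Fintype.card Q)]
      obtain ⟨a, b, hab, heq⟩ := Fintype.exists_ne_map_eq_of_card_lt
        (fun i : Fin (w.length + 1) =>
          ((w.take i.val).foldl δ p, (w.take i.val).foldl δ q)) hcard
      -- wlog a < b
      obtain ⟨i, j, hij, hgi⟩ : ∃ i j : Fin (w.length + 1), i.val < j.val ∧
          ((w.take i.val).foldl δ p, (w.take i.val).foldl δ q) =
          ((w.take j.val).foldl δ p, (w.take j.val).foldl δ q) := by
        rcases lt_or_gt_of_ne (Fin.val_ne_of_ne hab) with h | h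
        · exact ⟨a, b, h, heq⟩
        · exact ⟨b, a, h, heq.symm⟩
      set w' : List A := w.take i.val ++ w.drop j.val with hw'
      have hjle : j.val ≤ w.length := Nat.lt_succ_iff.mp j.isLt
      have key : ∀ r : Q, (w.take j.val).foldl δ r = (w.take i.val).foldl δ r →
          w'.foldl δ r = w.foldl δ r := by
        intro r hr
        have : w = w.take j.val ++ w.drop j.val := (List.take_append_drop _ _).symm
        conv_rhs => rw [this]
        rw [hw', List.foldl_append, List.foldl_append, hr]
      have hp : w'.foldl δ p = w.foldl δ p := key p (congrArg Prod.fst hgi).symm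
      have hq : w'.foldl δ q = w.foldl δ q := key q (congrArg Prod.snd hgi).symm
      have hlen' : w'.length < n := by
        rw [hw']
        simp only [List.length_append, List.length_take, List.length_drop]
        omega
      exact ih w'.length (by omega) w' rfl (by rw [hp, hq, hmerge])

/-- In a synchronizing DFA with `n` states, every subset of at least two states can be
compressed by a word of length at most `n^2`. -/
theorem stmt9 {Q A : Type*} [Fintype Q] [DecidableEq Q] (δ : Q → A → Q)
    (hsync : ∃ s : List A, ∃ q0 : Q, ∀ p : Q, s.foldl δ p = q0)
    (S : Finset Q) (hS : 2 ≤ S.card) :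
    ∃ w : List A, w.length ≤ (Fintype.card Q) ^ 2 ∧
      (S.image fun p => w.foldl δ p).card < S.card := by
  obtain ⟨p, hp, q, hq, hpq⟩ := Finset.one_lt_card.mp hS
  obtain ⟨s, q0, hs⟩ := hsync
  obtain ⟨w, hwlen, hw⟩ := merge_short δ p q s.length s rfl (by rw [hs p, hs q])
  refine ⟨w, hwlen, ?_⟩
  have himg : S.image (fun r => w.foldl δ r) = (S.erase q).image (fun r => w.foldl δ r) := by
    apply Finset.Subset.antisymm
    · intro x hx
      obtain ⟨r, hr, hrx⟩ := Finset.mem_image.mp hx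
      by_cases hrq : r = q
      · exact Finset.mem_image.mpr ⟨p, Finset.mem_erase.mpr ⟨hpq, hp⟩, by
          rw [hw]; rw [hrq] at hrx; exact hrx⟩
      · exact Finset.mem_image.mpr ⟨r, Finset.mem_erase.mpr ⟨hrq, hr⟩, hrx⟩
    · exact Finset.image_subset_image (Finset.erase_subset _ _)
  rw [himg]
  calc ((S.erase q).image _).card ≤ (S.erase q).card := Finset.card_image_le
    _ < S.card := Finset.card_erase_lt_of_mem hq
end

section
/- A deterministic finite automaton with n states that possesses a synchronizing word has a synchronizing word of length at most n³. -/
private lemma foldl_split {Q A : Type*} (δ : Q → A → Q) (w : List A) (j : ℕ) (p : Q) :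
    w.foldl δ p = (w.drop j).foldl δ ((w.take j).foldl δ p) := by
  conv_lhs => rw [← List.take_append_drop j w]
  rw [List.foldl_append]

/-- Any two mergeable states can be merged by a word of length at most n². -/
private lemma mergeShort {Q A : Type*} [Fintype Q] (δ : Q → A → Q) :
    ∀ (n : ℕ) (w : List A), w.length ≤ n → ∀ p q : Q, w.foldl δ p = w.foldl δ q →
      ∃ v : List A, v.length ≤ (Fintype.card Q) ^ 2 ∧ v.foldl δ p = v.foldl δ q := by
  intro n
  induction n with
  | zero =>
    intro w hw p q hpq
    exact ⟨w, by omega, hpq⟩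
  | succ n ih =>
    intro w hw p q hpq
    by_cases hlen : w.length ≤ (Fintype.card Q) ^ 2
    · exact ⟨w, hlen, hpq⟩
    push_neg at hlen
    -- pigeonhole on pairs along the word
    have hcardQ : Fintype.card (Q × Q) = (Fintype.card Q) ^ 2 := by
      simp [Fintype.card_prod, sq]
    have hninj : ¬ Function.Injective
        (fun i : Fin (w.length + 1) =>
          ((w.take i).foldl δ p, (w.take i).foldl δ q)) := by
      intro hinj
      have := Fintype.card_le_of_injective _ hinj
      simp [hcardQ] at this
      omega
    rw [Function.not_injective_iff] at hninj
    obtain ⟨i0, j0, hval0, hne0⟩ := hninj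
    have hne0' : (i0 : ℕ) ≠ (j0 : ℕ) := fun h => hne0 (Fin.ext h)
    obtain ⟨i, j, hval, hij⟩ : ∃ i j : Fin (w.length + 1),
        ((w.take (i:ℕ)).foldl δ p, (w.take (i:ℕ)).foldl δ q)
          = ((w.take (j:ℕ)).foldl δ p, (w.take (j:ℕ)).foldl δ q) ∧ (i:ℕ) < (j:ℕ) := by
      rcases lt_or_gt_of_ne hne0' with h | h
      · exact ⟨i0, j0, hval0, h⟩
      · exact ⟨j0, i0, hval0.symm, h⟩
    set v := w.take i ++ w.drop j with hv
    have hP : (fun r : Q => v.foldl δ r) = fun r => v.foldl δ r := rfl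
    have key : ∀ r : Q, v.foldl δ r = (w.drop j).foldl δ ((w.take i).foldl δ r) := by
      intro r; rw [hv, List.foldl_append]
    have hvp : v.foldl δ p = w.foldl δ p := by
      rw [key, foldl_split δ w j p]
      congr 1
      have := congrArg Prod.fst hval
      simpa using this
    have hvq : v.foldl δ q = w.foldl δ q := by
      rw [key, foldl_split δ w j q]
      congr 1
      have := congrArg Prod.snd hval
      simpa using this
    have hvlen : v.length ≤ n := by
      have hjle : (j : ℕ) ≤ w.length := by omega
      have : v.length = min (i : ℕ) w.length + (w.length - j) := by
        simp [hv]
      have hmin : min (i : ℕ) w.length ≤ (i : ℕ) := min_le_left _ _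
      omega
    exact ih v hvlen p q (by rw [hvp, hvq, hpq])

/-- A set of states can be synchronized by a word of length ≤ (|S|-1)·n². -/
private lemma syncSet {Q A : Type*} [Fintype Q] (δ : Q → A → Q)
    (hsync : ∃ s : List A, ∃ q0 : Q, ∀ p : Q, s.foldl δ p = q0) :
    ∀ (n : ℕ) (S : Finset Q), S.card ≤ n →
      ∃ w : List A, w.length ≤ (S.card - 1) * (Fintype.card Q) ^ 2 ∧
        ∀ p ∈ S, ∀ q ∈ S, w.foldl δ p = w.foldl δ q := by
  intro n
  induction n with
  | zero =>
    intro S hS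
    refine ⟨[], by simp, ?_⟩
    intro p hp
    simp [Finset.card_eq_zero.mp (Nat.le_zero.mp hS)] at hp
  | succ n ih =>
    intro S hS
    classical
    by_cases h1 : S.card ≤ 1
    · refine ⟨[], by simp, ?_⟩
      intro p hp q hq
      exact Finset.card_le_one.mp h1 p hp q hq
    push_neg at h1
    obtain ⟨p, hp, q, hq, hpq⟩ := Finset.one_lt_card.mp h1
    -- p and q are merged by the global synchronizing word
    obtain ⟨s, q0, hs⟩ := hsync
    have hmerge : s.foldl δ p = s.foldl δ q := by rw [hs p, hs q]
    obtain ⟨v, hvlen, hvmerge⟩ := mergeShort δ s.length s le_rfl p q hmerge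
    set f : Q → Q := fun x => v.foldl δ x with hf
    set T := (S.erase q).image f with hT
    have hTsub : S.image f ⊆ T := by
      intro x hx
      obtain ⟨y, hy, hxy⟩ := Finset.mem_image.mp hx
      by_cases hyq : y = q
      · refine Finset.mem_image.mpr ⟨p, Finset.mem_erase.mpr ⟨hpq, hp⟩, ?_⟩
        rw [← hxy, hyq]
        exact hvmerge
      · exact Finset.mem_image.mpr ⟨y, Finset.mem_erase.mpr ⟨hyq, hy⟩, hxy⟩
    have hTcard : T.card ≤ S.card - 1 := by
      calc T.card ≤ (S.erase q).card := Finset.card_image_le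
        _ = S.card - 1 := Finset.card_erase_of_mem hq
    obtain ⟨w2, hw2len, hw2⟩ := ih T (by omega)
    refine ⟨v ++ w2, ?_, ?_⟩
    · have : (v ++ w2).length = v.length + w2.length := List.length_append
      have h2 : T.card - 1 ≤ S.card - 2 := by omega
      have : w2.length ≤ (S.card - 2) * (Fintype.card Q) ^ 2 :=
        le_trans hw2len (Nat.mul_le_mul_right _ h2)
      have hineq : (Fintype.card Q) ^ 2 + (S.card - 2) * (Fintype.card Q) ^ 2
          = (S.card - 1) * (Fintype.card Q) ^ 2 := by
        have h3 : S.card - 1 = (S.card - 2) + 1 := by omega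
        rw [h3, Nat.succ_mul, Nat.add_comm]
      omega
    · intro a ha b hb
      rw [List.foldl_append, List.foldl_append]
      exact hw2 (f a) (hTsub (Finset.mem_image_of_mem f ha))
        (f b) (hTsub (Finset.mem_image_of_mem f hb))

/-- A synchronizing DFA with `n` states has a synchronizing word of length at most `n^3`. -/
theorem stmt10 {Q A : Type*} [Fintype Q] (δ : Q → A → Q)
    (hsync : ∃ s : List A, ∃ q0 : Q, ∀ p : Q, s.foldl δ p = q0) :
    ∃ s : List A, s.length ≤ (Fintype.card Q) ^ 3 ∧
      ∃ q0 : Q, ∀ p : Q, s.foldl δ p = q0 := by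
  obtain ⟨s0, p0, _⟩ := hsync
  obtain ⟨w, hwlen, hw⟩ := syncSet δ ⟨s0, p0, ‹_›⟩ (Fintype.card Q) Finset.univ
    (le_of_eq (Finset.card_univ))
  refine ⟨w, ?_, w.foldl δ p0, fun p => hw p (Finset.mem_univ p) p0 (Finset.mem_univ p0)⟩
  calc w.length ≤ (Finset.univ.card - 1) * (Fintype.card Q) ^ 2 := hwlen
    _ ≤ (Fintype.card Q) * (Fintype.card Q) ^ 2 := by
        apply Nat.mul_le_mul_right
        rw [Finset.card_univ]
        omega
    _ = (Fintype.card Q) ^ 3 := by ring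
end

section
/- In a finite strongly connected directed graph where every vertex has out-degree at least 1, if the greatest common divisor of the lengths of all cycles is 1, then there exists an integer N such that for all n ≥ N and all ordered pairs of vertices (u, v), there is a directed walk from u to v of length exactly n. -/
theorem hasWalk_append {V : Type*} (E : V → V → Prop) :
    ∀ {m n : ℕ} {u x v : V}, hasWalk E m u x → hasWalk E n x v →
      hasWalk E (m + n) u v := by
  intro m
  induction m with
  | zero =>
    intro n u x v h h'
    have : u = x := h
    subst this
    simpa using h'
  | succ m ih =>
    intro n u x v h h'
    obtain ⟨y, hy, hw⟩ := h
    have : m + 1 + n = (m + n) + 1 := by omega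
    rw [this]
    exact ⟨y, hy, ih hw h'⟩

theorem hasWalk_of_rtg {V : Type*} (E : V → V → Prop) {u v : V}
    (h : Relation.ReflTransGen E u v) : ∃ n, hasWalk E n u v := by
  induction h with
  | refl => exact ⟨0, rfl⟩
  | tail _ e ih =>
    obtain ⟨n, hn⟩ := ih
    exact ⟨n + 1, hasWalk_append E hn ⟨_, e, rfl⟩⟩

theorem hasWalk_mul {V : Type*} (E : V → V → Prop) {v : V} {m : ℕ}
    (h : hasWalk E m v v) : ∀ k, hasWalk E (k * m) v v := by
  intro k
  induction k with
  | zero =>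
    have : 0 * m = 0 := by ring
    rw [this]
    exact rfl
  | succ k ih =>
    have : (k + 1) * m = k * m + m := by ring
    rw [this]
    exact hasWalk_append E ih h

/-- In a strongly connected digraph with all out-degrees at least 1 and cycle-length gcd 1,
all long enough walk lengths are realized between every pair of vertices. -/
theorem stmt11 {V : Type*} [Fintype V] [Nonempty V] (E : V → V → Prop)
    (hout : ∀ v : V, ∃ w : V, E v w)
    (hsc : ∀ u v : V, Relation.ReflTransGen E u v)
    (hgcd : ∀ d : ℕ, (∀ n : ℕ, 0 < n → (∃ v : V, hasWalk E n v v) → d ∣ n) → d = 1) :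
    ∃ N : ℕ, ∀ n ≥ N, ∀ u v : V, hasWalk E n u v := by
  classical
  obtain ⟨v₀⟩ := (inferInstance : Nonempty V)
  set A : Set ℤ := {z : ℤ | ∃ n : ℕ, (n : ℤ) = z ∧ hasWalk E n v₀ v₀} with hA
  set G : AddSubgroup ℤ := AddSubgroup.closure A with hG
  obtain ⟨g, hg⟩ := Int.subgroup_cyclic G
  have memG : ∀ m : ℕ, hasWalk E m v₀ v₀ → (m : ℤ) ∈ G :=
    fun m hm => AddSubgroup.subset_closure ⟨m, rfl, hm⟩
  have gdvd : ∀ z : ℤ, z ∈ G → g ∣ z := by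
    intro z hz
    rw [hg, AddSubgroup.mem_closure_singleton] at hz
    obtain ⟨k, hk⟩ := hz
    exact ⟨k, by rw [← hk, smul_eq_mul]; ring⟩
  -- g.natAbs divides every cycle length anywhere
  have hdall : ∀ n : ℕ, 0 < n → (∃ v : V, hasWalk E n v v) → g.natAbs ∣ n := by
    rintro n _ ⟨v, hv⟩
    obtain ⟨a, ha⟩ := hasWalk_of_rtg E (hsc v₀ v)
    obtain ⟨b, hb⟩ := hasWalk_of_rtg E (hsc v v₀)
    have h1 : hasWalk E (a + b) v₀ v₀ := hasWalk_append E ha hb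
    have h2 : hasWalk E (a + (n + b)) v₀ v₀ :=
      hasWalk_append E ha (hasWalk_append E hv hb)
    have d1 := gdvd _ (memG _ h1)
    have d2 := gdvd _ (memG _ h2)
    have : g ∣ (n : ℤ) := by
      have : ((a : ℤ) + (n + b)) - ((a : ℤ) + b) = (n : ℤ) := by push_cast; ring
      rw [← this]
      exact dvd_sub d2 (by exact_mod_cast d1)
    have := Int.natAbs_dvd_natAbs.mpr this
    simpa using this
  have hd1 : g.natAbs = 1 := hgcd _ hdall
  have hone : (1 : ℤ) ∈ G := by
    rcases Int.natAbs_eq g with h | h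
    · have : g = 1 := by omega
      rw [hg, this]
      exact AddSubgroup.subset_closure rfl
    · have : g = -1 := by omega
      have hm : g ∈ G := by rw [hg]; exact AddSubgroup.subset_closure rfl
      rw [this] at hm
      simpa using neg_mem hm
  -- differences of cycle lengths form a subgroup containing G
  let T : AddSubgroup ℤ :=
    { carrier := {z : ℤ | ∃ x y : ℕ, hasWalk E x v₀ v₀ ∧ hasWalk E y v₀ v₀ ∧
        z = (x : ℤ) - (y : ℤ)}
      zero_mem' := ⟨0, 0, rfl, rfl, by ring⟩
      add_mem' := by
        rintro z w ⟨x, y, hx, hy, rfl⟩ ⟨x', y', hx', hy', rfl⟩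
        exact ⟨x + x', y + y', hasWalk_append E hx hx', hasWalk_append E hy hy',
          by push_cast; ring⟩
      neg_mem' := by
        rintro z ⟨x, y, hx, hy, rfl⟩
        exact ⟨y, x, hy, hx, by ring⟩ }
  have hGT : G ≤ T := by
    rw [hG]
    apply AddSubgroup.closure_le T |>.mpr
    rintro z ⟨n, rfl, hn⟩
    exact ⟨n, 0, hn, rfl, by push_cast; ring⟩
  obtain ⟨x, y, hx, hy, hxy⟩ := hGT hone
  have hxy' : x = y + 1 := by omega
  subst hxy'
  -- all n ≥ s*s are cycle lengths at v₀
  have hbig : ∀ n : ℕ, y * y ≤ n → hasWalk E n v₀ v₀ := by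
    intro n hn
    rcases Nat.eq_zero_or_pos y with h0 | hpos
    · subst h0
      have := hasWalk_mul E hx n
      rw [show n * (0 + 1) = n by ring] at this
      exact this
    · set q := n / y with hq
      set r := n % y with hr
      have hrq : r ≤ q := by
        have h1 : r < y := Nat.mod_lt _ hpos
        have h2 : y ≤ q := (Nat.le_div_iff_mul_le hpos).mpr hn
        omega
      obtain ⟨k, hk⟩ := Nat.exists_eq_add_of_le hrq
      have hdm : y * q + r = n := Nat.div_add_mod n y
      have e : n = k * y + r * (y + 1) := by
        rw [← hdm, hk]; ring
      rw [e]
      exact hasWalk_append E (hasWalk_mul E hy k) (hasWalk_mul E hx r)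
  -- pad with paths
  have fa : ∀ u : V, ∃ n, hasWalk E n u v₀ := fun u => hasWalk_of_rtg E (hsc u v₀)
  have fb : ∀ v : V, ∃ n, hasWalk E n v₀ v := fun v => hasWalk_of_rtg E (hsc v₀ v)
  set Fa : V → ℕ := fun u => (fa u).choose with hFa
  set Fb : V → ℕ := fun v => (fb v).choose with hFb
  refine ⟨y * y + Finset.univ.sup Fa + Finset.univ.sup Fb, fun n hn u v => ?_⟩
  have hau : Fa u ≤ Finset.univ.sup Fa := Finset.le_sup (Finset.mem_univ u)
  have hbv : Fb v ≤ Finset.univ.sup Fb := Finset.le_sup (Finset.mem_univ v)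
  set m := n - Fa u - Fb v with hm
  have hmge : y * y ≤ m := by omega
  have hn' : n = Fa u + (m + Fb v) := by omega
  rw [hn']
  exact hasWalk_append E (fa u).choose_spec
    (hasWalk_append E (hbig m hmge) (fb v).choose_spec)
end
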